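/- arXiv:1712.08112 — 4 statements merged into one kernel-verified Lean document; each statement's English description precedes it below -/
import Mathlib

section
/- Let F be a field, let E be an algebraic Galois field extension of F, and let v and w be absolute values on E. Equip the Galois group Gal(E/F) with the Krull topology, and let S = {σ ∈ Gal(E/F) : |σ(x)|_w = |x|_v for all x ∈ E}, with the subspace topology. Each σ ∈ S is an isometry from (E, |·|_v) to (E, |·|_w) and hence extends uniquely to a continuous map ψ_σ : E_v → E_w between the completions. Then the map ψ : S × E_v → E_w defined by ψ(σ, α) = ψ_σ(α) is continuous. -/
/-- Lemma `SContinuity`: Let `E/F` be a Galois extension, `v, w` absolute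
values on `E`, and `S = {σ ∈ Gal(E/F) : |σ x|_w = |x|_v for all x}` (with the subspace
topology of the Krull topology).  Each `σ ∈ S` is an isometry `(E, v) → (E, w)` and hence
extends uniquely to a continuous map `ψ_σ : E_v → E_w` between the completions; here the
family `Ψ` of these extensions is characterized by being continuous in the second variable
and agreeing with `σ` on the dense image of `E`.  Then `ψ(σ, α) = ψ_σ(α)` is continuous
as a map `S × E_v → E_w`. -/
theorem sContinuity {F E : Type*} [Field F] [Field E] [Algebra F E]
    [Algebra.IsAlgebraic F E] [IsGalois F E]
    (v w : AbsoluteValue E ℝ)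
    (Ψ : {σ : E ≃ₐ[F] E // ∀ x : E, w (σ x) = v x} → v.Completion → w.Completion)
    (hΨcont : ∀ σ, Continuous (Ψ σ))
    (hΨext : ∀ σ (x : E),
      Ψ σ (((WithAbs.equiv v).symm x : WithAbs v) : v.Completion)
        = (((WithAbs.equiv w).symm (σ.1 x) : WithAbs w) : w.Completion)) :
    Continuous fun p : {σ : E ≃ₐ[F] E // ∀ x : E, w (σ x) = v x} × v.Completion =>
      Ψ p.1 p.2 := by
  have hnormv : ∀ x : WithAbs v, ‖x‖ = v (WithAbs.equiv v x) := fun x => rfl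
  have hnormw : ∀ x : WithAbs w, ‖x‖ = w (WithAbs.equiv w x) := fun x => rfl
  have hiso : ∀ σ, Isometry (Ψ σ) := by
    intro σ
    refine Isometry.of_dist_eq fun a b => ?_
    refine UniformSpace.Completion.induction_on₂ a b ?_ fun x y => ?_
    · exact isClosed_eq
        (Continuous.dist ((hΨcont σ).comp continuous_fst) ((hΨcont σ).comp continuous_snd))
        continuous_dist
    · have hx := hΨext σ (WithAbs.equiv v x)
      have hy := hΨext σ (WithAbs.equiv v y)
      simp only [RingEquiv.symm_apply_apply] at hx hy
      rw [hx, hy, UniformSpace.Completion.dist_eq, UniformSpace.Completion.dist_eq,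
        dist_eq_norm, dist_eq_norm, hnormw, hnormv]
      simp only [RingEquiv.apply_symm_apply, ← map_sub, σ.2]
  rw [continuous_iff_continuousAt]
  rintro ⟨σ₀, α₀⟩
  refine Metric.tendsto_nhds.mpr fun ε hε => ?_
  obtain ⟨x, hx⟩ := Metric.denseRange_iff.mp
    (UniformSpace.Completion.denseRange_coe (α := WithAbs v)) α₀ (ε / 3) (by linarith)
  rw [dist_comm] at hx
  -- the set of σ agreeing with σ₀ at x is a neighborhood
  have hfin : FiniteDimensional F (IntermediateField.adjoin F {(WithAbs.equiv v x : E)}) :=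
    IntermediateField.adjoin.finiteDimensional
      (Algebra.IsIntegral.isIntegral (WithAbs.equiv v x : E))
  have hopen : IsOpen (((IntermediateField.adjoin F {(WithAbs.equiv v x : E)}).fixingSubgroup : Set (E ≃ₐ[F] E))) :=
    IntermediateField.fixingSubgroup_isOpen _
  have hnhd : ∀ᶠ σ in nhds σ₀,
      (σ : {σ : E ≃ₐ[F] E // ∀ x : E, w (σ x) = v x}).1 (WithAbs.equiv v x)
        = σ₀.1 (WithAbs.equiv v x) := by
    have h1 : ∀ᶠ τ in nhds σ₀.1, τ (WithAbs.equiv v x) = σ₀.1 (WithAbs.equiv v x) := by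
      have : IsOpen ((fun τ => σ₀.1 * τ) '' ((IntermediateField.adjoin F {(WithAbs.equiv v x : E)}).fixingSubgroup
          : Set (E ≃ₐ[F] E))) := (Homeomorph.mulLeft σ₀.1).isOpenMap _ hopen
      refine Filter.mem_of_superset (this.mem_nhds ?_) ?_
      · exact ⟨1, (IntermediateField.adjoin F {(WithAbs.equiv v x : E)}).fixingSubgroup.one_mem, mul_one _⟩
      · rintro τ ⟨g, hg, rfl⟩
        have := hg ⟨WithAbs.equiv v x, IntermediateField.mem_adjoin_simple_self F _⟩
        simpa using congrArg σ₀.1 this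
    exact (continuous_subtype_val.tendsto σ₀).eventually h1
  have hball : ∀ᶠ α in nhds α₀, dist α α₀ < ε / 3 :=
    Metric.ball_mem_nhds α₀ (by linarith)
  rw [nhds_prod_eq]
  filter_upwards [Filter.prod_mem_prod hnhd hball] with p hp
  obtain ⟨hp1, hp2⟩ := hp
  simp only [Set.mem_setOf_eq] at hp1 hp2
  calc dist (Ψ p.1 p.2) (Ψ σ₀ α₀)
      ≤ dist (Ψ p.1 p.2) (Ψ p.1 ((x : WithAbs v) : v.Completion))
        + dist (Ψ p.1 ((x : WithAbs v) : v.Completion)) (Ψ σ₀ ((x : WithAbs v) : v.Completion))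
        + dist (Ψ σ₀ ((x : WithAbs v) : v.Completion)) (Ψ σ₀ α₀) := dist_triangle4 _ _ _ _
    _ < ε := by
        have e1 : dist (Ψ p.1 p.2) (Ψ p.1 ((x : WithAbs v) : v.Completion))
            = dist p.2 ((x : WithAbs v) : v.Completion) := (hiso p.1).dist_eq _ _
        have e3 : dist (Ψ σ₀ ((x : WithAbs v) : v.Completion)) (Ψ σ₀ α₀)
            = dist ((x : WithAbs v) : v.Completion) α₀ := (hiso σ₀).dist_eq _ _
        have e2 : Ψ p.1 ((x : WithAbs v) : v.Completion)
            = Ψ σ₀ ((x : WithAbs v) : v.Completion) := by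
          have ha := hΨext p.1 (WithAbs.equiv v x)
          have hb := hΨext σ₀ (WithAbs.equiv v x)
          simp only [RingEquiv.symm_apply_apply] at ha hb
          rw [ha, hb, hp1]
        have : dist p.2 ((x : WithAbs v) : v.Completion)
            ≤ dist p.2 α₀ + dist α₀ ((x : WithAbs v) : v.Completion) := dist_triangle _ _ _
        rw [e1, e2, e3, dist_self]
        rw [dist_comm α₀ _] at this
        linarith [hp2, hx, this]
end

section
/- Let G be a compact Hausdorff topological group acting continuously and transitively on a nonempty Hausdorff topological space Y, and let (H_i)_{i ∈ ℕ} be a decreasing sequence of closed normal subgroups of G with H_0 = G. Then there exists a map λ : Y × Y → G satisfying: (i) λ(x, x) = 1 for all x ∈ Y; (ii) λ(x, y) • x = y for all x, y ∈ Y; (iii) λ(y, z) λ(x, y) = λ(x, z) for all x, y, z ∈ Y; (iv) for every i ∈ ℕ, if x and y lie in the same H_i-orbit of Y, then λ(x, y) ∈ H_i. -/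
namespace BNFS

variable {G Y : Type*} [Group G] [MulAction G Y]

/-- The `H i`-orbit relation. -/
def rel (H : ℕ → Subgroup G) (i : ℕ) (x y : Y) : Prop := ∃ h ∈ H i, h • x = y

theorem rel_refl (H : ℕ → Subgroup G) (i : ℕ) (x : Y) : rel H i x x :=
  ⟨1, one_mem _, one_smul _ _⟩

theorem rel_symm (H : ℕ → Subgroup G) {i : ℕ} {x y : Y} :
    rel H i x y → rel H i y x := by
  rintro ⟨h, hm, rfl⟩
  exact ⟨h⁻¹, inv_mem hm, inv_smul_smul h x⟩

theorem rel_trans (H : ℕ → Subgroup G) {i : ℕ} {x y z : Y} :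
    rel H i x y → rel H i y z → rel H i x z := by
  rintro ⟨h, hm, rfl⟩ ⟨g, gm, rfl⟩
  exact ⟨g * h, mul_mem gm hm, mul_smul g h x⟩

theorem H_mono (H : ℕ → Subgroup G) (hdec : ∀ i, H (i + 1) ≤ H i)
    {i j : ℕ} (hij : i ≤ j) : H j ≤ H i := by
  have key : ∀ k, H (i + k) ≤ H i := by
    intro k
    induction k with
    | zero => exact le_rfl
    | succ k ih => exact le_trans (hdec (i + k)) ih
  obtain ⟨k, rfl⟩ := Nat.exists_eq_add_of_le hij
  exact key k

theorem rel_mono (H : ℕ → Subgroup G) (hdec : ∀ i, H (i + 1) ≤ H i)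
    {i j : ℕ} (hij : i ≤ j) {x y : Y} (h : rel H j x y) : rel H i x y := by
  obtain ⟨h, hm, hs⟩ := h
  exact ⟨h, H_mono H hdec hij hm, hs⟩

/-- The setoid given by the `H i`-orbit relation. -/
def sd (H : ℕ → Subgroup G) (i : ℕ) : Setoid Y :=
  ⟨rel H i, ⟨rel_refl H i, rel_symm H, rel_trans H⟩⟩

/-- A representative of the `H i`-orbit of `y`. -/
noncomputable def rho (H : ℕ → Subgroup G) (i : ℕ) (y : Y) : Y :=
  (Quotient.mk (sd H i) y).out

theorem rel_rho (H : ℕ → Subgroup G) (i : ℕ) (y : Y) : rel H i (rho H i y) y :=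
  Quotient.exact (s := sd H i) (Quotient.out_eq _)

theorem rho_congr (H : ℕ → Subgroup G) {i : ℕ} {x y : Y} (h : rel H i x y) :
    rho H i x = rho H i y := by
  unfold rho
  rw [Quotient.sound (s := sd H i) h]

open Classical in
/-- A chosen connector in `H i` between related points. -/
noncomputable def gam (H : ℕ → Subgroup G) (i : ℕ) (a b : Y) : G :=
  if h : rel H i a b then h.choose else 1

theorem gam_spec (H : ℕ → Subgroup G) {i : ℕ} {a b : Y} (h : rel H i a b) :
    gam H i a b ∈ H i ∧ gam H i a b • a = b := by
  unfold gam
  rw [dif_pos h]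
  exact h.choose_spec

/-- Connector from `rho i y` to `rho (i+1) y`. -/
noncomputable def con (H : ℕ → Subgroup G) (i : ℕ) (y : Y) : G :=
  gam H i (rho H i y) (rho H (i + 1) y)

theorem rel_rho_rho (H : ℕ → Subgroup G) (hdec : ∀ i, H (i + 1) ≤ H i) (i : ℕ) (y : Y) :
    rel H i (rho H i y) (rho H (i + 1) y) :=
  rel_trans H (rel_rho H i y)
    (rel_symm H (rel_mono H hdec (Nat.le_succ i) (rel_rho H (i + 1) y)))

theorem con_spec (H : ℕ → Subgroup G) (hdec : ∀ i, H (i + 1) ≤ H i) (i : ℕ) (y : Y) :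
    con H i y ∈ H i ∧ con H i y • rho H i y = rho H (i + 1) y :=
  gam_spec H (rel_rho_rho H hdec i y)

/-- Partial products of connectors. -/
noncomputable def pp (H : ℕ → Subgroup G) : ℕ → Y → G
  | 0, _ => 1
  | n + 1, y => con H n y * pp H n y

theorem pp_congr (H : ℕ → Subgroup G) (hdec : ∀ i, H (i + 1) ≤ H i) :
    ∀ (i : ℕ) {x y : Y}, rel H i x y → pp H i x = pp H i y := by
  intro i
  induction i with
  | zero => intro x y _; rfl
  | succ i ih =>
    intro x y h
    have hi : rel H i x y := rel_mono H hdec (Nat.le_succ i) h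
    have h1 : rho H i x = rho H i y := rho_congr H hi
    have h2 : rho H (i + 1) x = rho H (i + 1) y := rho_congr H h
    show con H i x * pp H i x = con H i y * pp H i y
    rw [ih hi, con, con, h1, h2]

theorem pp_smul (H : ℕ → Subgroup G) (hdec : ∀ i, H (i + 1) ≤ H i) (y₀ : Y)
    (hall : ∀ y : Y, rho H 0 y = rho H 0 y₀) :
    ∀ (n : ℕ) (y : Y), pp H n y • rho H 0 y₀ = rho H n y := by
  intro n
  induction n with
  | zero => intro y; show (1 : G) • _ = _; rw [one_smul, ← hall y]
  | succ n ih =>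
    intro y
    show (con H n y * pp H n y) • _ = _
    rw [mul_smul, ih y, (con_spec H hdec n y).2]

theorem pp_mem_coset (H : ℕ → Subgroup G) (hdec : ∀ i, H (i + 1) ≤ H i) :
    ∀ (m n : ℕ), m ≤ n → ∀ y : Y, pp H n y * (pp H m y)⁻¹ ∈ H m := by
  intro m n hmn
  have key : ∀ (k : ℕ) (y : Y), pp H (m + k) y * (pp H m y)⁻¹ ∈ H m := by
    intro k
    induction k with
    | zero => intro y; simpa using one_mem (H m)
    | succ k ih =>
      intro y
      have h1 : pp H (m + (k + 1)) y = con H (m + k) y * pp H (m + k) y := rfl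
      rw [h1, mul_assoc]
      exact mul_mem
        (H_mono H hdec (Nat.le_add_right m k) (con_spec H hdec (m + k) y).1) (ih y)
  obtain ⟨k, rfl⟩ := Nat.exists_eq_add_of_le hmn
  exact key k

end BNFS

open BNFS in
/-- Lemma `BetterNumberFieldStack`, abstract form: Let `G` be a compact
Hausdorff topological group acting continuously and transitively on a nonempty Hausdorff
space `Y`, and let `(H i)` be a decreasing sequence of closed normal subgroups of `G`
with `H 0 = G`.  Then there is a map `lam : Y × Y → G` with `lam (x, x) = 1`,
`lam (x, y) • x = y`, `lam (y, z) * lam (x, y) = lam (x, z)`, and such that whenever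
`x` and `y` lie in the same `H i`-orbit, `lam (x, y) ∈ H i`. -/
theorem betterNumberFieldStack {G Y : Type*} [Group G] [TopologicalSpace G]
    [IsTopologicalGroup G] [CompactSpace G] [T2Space G]
    [TopologicalSpace Y] [T2Space Y] [Nonempty Y]
    [MulAction G Y] [ContinuousSMul G Y] [MulAction.IsPretransitive G Y]
    (H : ℕ → Subgroup G) (hnormal : ∀ i, (H i).Normal)
    (hclosed : ∀ i, IsClosed (H i : Set G))
    (hdec : ∀ i, H (i + 1) ≤ H i) (h0 : H 0 = ⊤) :
    ∃ lam : Y × Y → G,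
      (∀ x : Y, lam (x, x) = 1) ∧
      (∀ x y : Y, lam (x, y) • x = y) ∧
      (∀ x y z : Y, lam (y, z) * lam (x, y) = lam (x, z)) ∧
      (∀ (i : ℕ) (x y : Y), (∃ h ∈ H i, h • x = y) → lam (x, y) ∈ H i) := by
  classical
  obtain ⟨y₀⟩ := ‹Nonempty Y›
  -- `rel H 0` is the total relation
  have hrel0 : ∀ x y : Y, rel H 0 x y := by
    intro x y
    obtain ⟨g, hg⟩ := MulAction.exists_smul_eq G x y
    exact ⟨g, by rw [h0]; trivial, hg⟩
  have hall : ∀ y : Y, rho H 0 y = rho H 0 y₀ := fun y => rho_congr H (hrel0 y y₀)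
  set x₀ : Y := rho H 0 y₀ with hx₀
  -- the nested compact sets
  set B : ℕ → Y → Set G := fun n y =>
    {g | g * (pp H n y)⁻¹ ∈ H n ∧ g • x₀ = y} with hB
  have hBclosed : ∀ n y, IsClosed (B n y) := by
    intro n y
    apply IsClosed.inter
    · exact (hclosed n).preimage (continuous_mul_right _)
    · exact isClosed_singleton.preimage (continuous_id.smul continuous_const)
  have hBnonempty : ∀ n y, (B n y).Nonempty := by
    intro n y
    obtain ⟨h, hm, hs⟩ := rel_rho H n y
    refine ⟨h * pp H n y, ?_, ?_⟩
    · simpa using hm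
    · rw [mul_smul, pp_smul H hdec y₀ hall n y, hs]
  have hBdec : ∀ n y, B (n + 1) y ⊆ B n y := by
    intro n y g hg
    refine ⟨?_, hg.2⟩
    have h1 : g * (pp H n y)⁻¹ =
        (g * (pp H (n + 1) y)⁻¹) * (pp H (n + 1) y * (pp H n y)⁻¹) := by
      group
    rw [h1]
    exact mul_mem (hdec n hg.1) (pp_mem_coset H hdec n (n + 1) (Nat.le_succ n) y)
  have hf : ∀ y : Y, ∃ g : G, ∀ n : ℕ, g ∈ B n y := by
    intro y
    have := IsCompact.nonempty_iInter_of_sequence_nonempty_isCompact_isClosed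
      (fun n => B n y) (fun n => hBdec n y) (fun n => hBnonempty n y)
      ((hBclosed 0 y).isCompact) (fun n => hBclosed n y)
    obtain ⟨g, hg⟩ := this
    exact ⟨g, fun n => Set.mem_iInter.mp hg n⟩
  choose f hfspec using hf
  have hfsmul : ∀ y : Y, f y • x₀ = y := fun y => (hfspec y 0).2
  refine ⟨fun p => f p.2 * (f p.1)⁻¹, ?_, ?_, ?_, ?_⟩
  · intro x; simp
  · intro x y
    show (f y * (f x)⁻¹) • x = y
    have h4 : (f x)⁻¹ • x = x₀ := by
      have := inv_smul_smul (f x) x₀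
      rwa [hfsmul x] at this
    rw [mul_smul, h4, hfsmul y]
  · intro x y z; group
  · intro i x y hxy
    have hrel : rel H i x y := hxy
    have hp : pp H i x = pp H i y := pp_congr H hdec i hrel
    have h1 : f y * (pp H i y)⁻¹ ∈ H i := (hfspec y i).1
    have h2 : f x * (pp H i x)⁻¹ ∈ H i := (hfspec x i).1
    have h3 : f y * (f x)⁻¹ =
        (f y * (pp H i y)⁻¹) * (f x * (pp H i x)⁻¹)⁻¹ := by
      rw [hp]; group
    show f y * (f x)⁻¹ ∈ H i
    rw [h3]
    exact mul_mem h1 (inv_mem h2)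
end

section
/- Let G be a topological group in which the open normal subgroups form a neighborhood basis of the identity, and let Y be a topological space. Let λ : Y × Y → G be a map satisfying λ(x, x) = 1 for all x ∈ Y and λ(y, z) λ(x, y) = λ(x, z) for all x, y, z ∈ Y. Suppose that for every open normal subgroup H of G and every x ∈ Y there exists an open neighborhood U of x such that λ(U × U) ⊆ H. Then λ is continuous. -/
/-- Let `G` be a topological group in which the open normal subgroups form
a neighborhood basis of the identity, `Y` a topological space, and `lam : Y × Y → G` a map
with `lam (x, x) = 1` and `lam (y, z) * lam (x, y) = lam (x, z)`.  If for every open normal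
subgroup `H` of `G` and every `x ∈ Y` there is an open neighborhood `U` of `x` with
`lam (U × U) ⊆ H`, then `lam` is continuous. -/
theorem transitionContinuity {G Y : Type*} [Group G] [TopologicalSpace G]
    [IsTopologicalGroup G] [TopologicalSpace Y]
    (hbasis : ∀ U ∈ nhds (1 : G), ∃ H : Subgroup G, H.Normal ∧ IsOpen (H : Set G) ∧
      (H : Set G) ⊆ U)
    (lam : Y × Y → G)
    (hid : ∀ x : Y, lam (x, x) = 1)
    (hcoc : ∀ x y z : Y, lam (y, z) * lam (x, y) = lam (x, z))
    (hloc : ∀ H : Subgroup G, H.Normal → IsOpen (H : Set G) → ∀ x : Y,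
      ∃ U : Set Y, IsOpen U ∧ x ∈ U ∧ ∀ x₀ ∈ U, ∀ y₀ ∈ U, lam (x₀, y₀) ∈ H) :
    Continuous lam := by
  rw [continuous_iff_continuousAt]
  rintro ⟨x, y⟩
  rw [ContinuousAt, Filter.tendsto_def]
  intro W hW
  have h1 : (fun h => h * lam (x, y)) ⁻¹' W ∈ nhds (1 : G) := by
    have hc : ContinuousAt (fun h => h * lam (x, y)) (1 : G) :=
      (continuous_mul_right (lam (x, y))).continuousAt
    have : W ∈ nhds ((1 : G) * lam (x, y)) := by simpa using hW
    exact hc this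
  obtain ⟨H, hN, hO, hHW⟩ := hbasis _ h1
  obtain ⟨U, hUo, hxU, hU⟩ := hloc H hN hO x
  obtain ⟨V, hVo, hyV, hV⟩ := hloc H hN hO y
  have hmem : U ×ˢ V ∈ nhds (x, y) := (hUo.prod hVo).mem_nhds ⟨hxU, hyV⟩
  refine Filter.mem_of_superset hmem ?_
  rintro ⟨x₀, y₀⟩ ⟨hx₀, hy₀⟩
  have key : lam (x₀, y₀) = lam (y, y₀) * lam (x, y) * lam (x₀, x) := by
    rw [mul_assoc, hcoc x₀ x y, hcoc x₀ y y₀]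
  have h2 : lam (y, y₀) ∈ H := hV y hyV y₀ hy₀
  have h3 : lam (x₀, x) ∈ H := hU x₀ hx₀ x hxU
  have h4 : lam (x, y) * lam (x₀, x) * (lam (x, y))⁻¹ ∈ H := hN.conj_mem _ h3 _
  have h5 : lam (x₀, y₀) * (lam (x, y))⁻¹ ∈ H := by
    have heq : lam (x₀, y₀) * (lam (x, y))⁻¹ =
        lam (y, y₀) * (lam (x, y) * lam (x₀, x) * (lam (x, y))⁻¹) := by
      rw [key]; group
    rw [heq]; exact H.mul_mem h2 h4
  have := hHW h5
  simpa using this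
end

section
/- Let G be a compact Hausdorff topological group acting continuously and transitively on a nonempty Hausdorff topological space Y. Let (H_i)_{i ∈ ℕ} be a decreasing sequence of open normal subgroups of G with H_0 = G which forms a neighborhood basis of the identity of G, and suppose that for every i ∈ ℕ every H_i-orbit in Y is open in Y. Then there exists a continuous map λ : Y × Y → G satisfying: (i) λ(x, x) = 1 for all x ∈ Y; (ii) λ(x, y) • x = y for all x, y ∈ Y; (iii) λ(y, z) λ(x, y) = λ(x, z) for all x, y, z ∈ Y. -/
section Aux

variable {G Y : Type*} [Group G] [MulAction G Y]

/-- The equivalence relation "being in the same `H i`-orbit". -/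
def trSetoid (H : ℕ → Subgroup G) (i : ℕ) : Setoid Y where
  r x y := ∃ h ∈ H i, h • x = y
  iseqv := by
    refine ⟨fun x => ⟨1, (H i).one_mem, one_smul _ _⟩, ?_, ?_⟩
    · rintro x y ⟨h, hh, rfl⟩
      exact ⟨h⁻¹, (H i).inv_mem hh, inv_smul_smul h x⟩
    · rintro x y z ⟨h, hh, rfl⟩ ⟨k, hk, rfl⟩
      exact ⟨k * h, (H i).mul_mem hk hh, mul_smul k h x⟩

/-- A choice of representative of the `H i`-orbit of `x`. -/
noncomputable def trRep (H : ℕ → Subgroup G) (i : ℕ) (x : Y) : Y :=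
  (Quotient.mk (trSetoid H i) x).out

lemma trRep_rel (H : ℕ → Subgroup G) (i : ℕ) (x : Y) :
    (trSetoid H i).r (trRep H i x) x :=
  Quotient.exact (Quotient.out_eq _)

lemma trRep_eq_of_rel (H : ℕ → Subgroup G) (i : ℕ) {x y : Y}
    (h : (trSetoid H i).r x y) : trRep H i x = trRep H i y :=
  congrArg Quotient.out (Quotient.sound h)

open Classical in
/-- One step of the construction. -/
noncomputable def trSecStep (H : ℕ → Subgroup G) (x₀ : Y) (i : ℕ) (si : Y → G)
    (r : Y) : G :=
  if h : ∃ g ∈ H i, g • (si r • x₀) = r then h.choose * si r else si r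

/-- Approximate sections `Y → G` at level `i`. -/
noncomputable def trSec (H : ℕ → Subgroup G) (x₀ : Y) : ℕ → Y → G
  | 0, _ => 1
  | (i + 1), x => trSecStep H x₀ i (trSec H x₀ i) (trRep H (i + 1) x)

lemma trSec_succ (H : ℕ → Subgroup G) (x₀ : Y) (i : ℕ) (x : Y) :
    trSec H x₀ (i + 1) x = trSecStep H x₀ i (trSec H x₀ i) (trRep H (i + 1) x) := by
  rw [trSec]

lemma trSecStep_eq (H : ℕ → Subgroup G) (x₀ : Y) (i : ℕ) (si : Y → G) (r : Y)
    (h : ∃ g ∈ H i, g • (si r • x₀) = r) :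
    trSecStep H x₀ i si r = h.choose * si r := by
  rw [trSecStep, dif_pos h]

/-- key invariants of `trSec`, proved simultaneously by induction. -/
lemma trSec_spec (H : ℕ → Subgroup G) (x₀ : Y)
    [MulAction.IsPretransitive G Y]
    (hdec : ∀ i, H (i + 1) ≤ H i) (h0 : H 0 = ⊤) :
    ∀ i : ℕ,
      (∀ x y : Y, (trSetoid H i).r x y → trSec H x₀ i x = trSec H x₀ i y) ∧
      (∀ x : Y, ∃ k ∈ H i, k • (trSec H x₀ i x • x₀) = x) := by
  intro i
  induction i with
  | zero =>
    refine ⟨fun x y _ => rfl, fun x => ?_⟩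
    obtain ⟨k, hk⟩ := MulAction.exists_smul_eq G x₀ x
    exact ⟨k, by simp [h0], by simpa [trSec] using hk⟩
  | succ i ih =>
    obtain ⟨ihA, ihB⟩ := ih
    have hex : ∀ x : Y,
        ∃ g ∈ H i, g • (trSec H x₀ i (trRep H (i+1) x) • x₀) = trRep H (i+1) x :=
      fun x => ihB (trRep H (i+1) x)
    have hval : ∀ x : Y, trSec H x₀ (i+1) x =
        (hex x).choose * trSec H x₀ i (trRep H (i+1) x) := fun x =>
      (trSec_succ H x₀ i x).trans (trSecStep_eq H x₀ i _ _ (hex x))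
    constructor
    · intro x y hxy
      have h' : trRep H (i+1) x = trRep H (i+1) y := trRep_eq_of_rel H (i+1) hxy
      rw [trSec_succ, trSec_succ, h']
    · intro x
      have hcs := (hex x).choose_spec
      have h1 : trSec H x₀ (i+1) x • x₀ = trRep H (i+1) x := by
        rw [hval x, mul_smul]
        exact hcs.2
      obtain ⟨k, hk, hkx⟩ := trRep_rel H (i+1) x
      exact ⟨k, hk, by rw [h1]; exact hkx⟩

lemma trSec_step (H : ℕ → Subgroup G) (x₀ : Y)
    [MulAction.IsPretransitive G Y]
    (hdec : ∀ i, H (i + 1) ≤ H i) (h0 : H 0 = ⊤) (i : ℕ) (x : Y) :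
    trSec H x₀ (i + 1) x * (trSec H x₀ i x)⁻¹ ∈ H i := by
  obtain ⟨ihA, ihB⟩ := trSec_spec H x₀ hdec h0 i
  have hrel : (trSetoid H i).r (trRep H (i+1) x) x := by
    obtain ⟨k, hk, hkx⟩ := trRep_rel H (i+1) x
    exact ⟨k, hdec i hk, hkx⟩
  have hx : trSec H x₀ i (trRep H (i+1) x) = trSec H x₀ i x := ihA _ _ hrel
  have hex : ∃ g ∈ H i, g • (trSec H x₀ i (trRep H (i+1) x) • x₀) = trRep H (i+1) x :=
    ihB (trRep H (i+1) x)
  have hval : trSec H x₀ (i+1) x = hex.choose * trSec H x₀ i (trRep H (i+1) x) :=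
    (trSec_succ H x₀ i x).trans (trSecStep_eq H x₀ i _ _ hex)
  have h1 : trSec H x₀ i (trRep H (i+1) x) * (trSec H x₀ i x)⁻¹ = 1 := by
    rw [hx, mul_inv_cancel]
  rw [hval, mul_assoc, h1, mul_one]
  exact hex.choose_spec.1

lemma trSec_mem (H : ℕ → Subgroup G) (x₀ : Y)
    [MulAction.IsPretransitive G Y]
    (hdec : ∀ i, H (i + 1) ≤ H i) (h0 : H 0 = ⊤) {j i : ℕ} (hji : j ≤ i) (x : Y) :
    trSec H x₀ i x * (trSec H x₀ j x)⁻¹ ∈ H j := by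
  have hanti : Antitone H := antitone_nat_of_succ_le hdec
  induction i, hji using Nat.le_induction with
  | base => simpa using (H j).one_mem
  | succ i hji ih =>
    have h1 : trSec H x₀ (i+1) x * (trSec H x₀ i x)⁻¹ ∈ H j :=
      hanti hji (trSec_step H x₀ hdec h0 i x)
    have := (H j).mul_mem h1 ih
    simpa [mul_assoc] using this

end Aux

/-- Theorem `TransitionExistence`, abstract form: Let `G` be a compact
Hausdorff topological group acting continuously and transitively on a nonempty Hausdorff
space `Y`.  Let `(H i)` be a decreasing sequence of open normal subgroups of `G` with
`H 0 = G` forming a neighborhood basis of the identity, and suppose every `H i`-orbit in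
`Y` is open.  Then there exists a continuous map `lam : Y × Y → G` with `lam (x, x) = 1`,
`lam (x, y) • x = y`, and `lam (y, z) * lam (x, y) = lam (x, z)`. -/
theorem transitionExistence {G Y : Type*} [Group G] [TopologicalSpace G]
    [IsTopologicalGroup G] [CompactSpace G] [T2Space G]
    [TopologicalSpace Y] [T2Space Y] [Nonempty Y]
    [MulAction G Y] [ContinuousSMul G Y] [MulAction.IsPretransitive G Y]
    (H : ℕ → Subgroup G) (hnormal : ∀ i, (H i).Normal)
    (hopen : ∀ i, IsOpen (H i : Set G))
    (hdec : ∀ i, H (i + 1) ≤ H i) (h0 : H 0 = ⊤)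
    (hbasis : ∀ U ∈ nhds (1 : G), ∃ i : ℕ, (H i : Set G) ⊆ U)
    (horbit : ∀ (i : ℕ) (x : Y), IsOpen {y : Y | ∃ h ∈ H i, h • x = y}) :
    ∃ lam : Y × Y → G, Continuous lam ∧
      (∀ x : Y, lam (x, x) = 1) ∧
      (∀ x y : Y, lam (x, y) • x = y) ∧
      (∀ x y z : Y, lam (y, z) * lam (x, y) = lam (x, z)) := by
  classical
  obtain ⟨x₀⟩ := ‹Nonempty Y›
  set s : ℕ → Y → G := trSec H x₀ with hs
  have hA := fun i => (trSec_spec H x₀ hdec h0 i).1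
  have hB := fun i => (trSec_spec H x₀ hdec h0 i).2
  -- the nested closed cosets
  set C : Y → ℕ → Set G := fun x j => {g : G | g * (s j x)⁻¹ ∈ H j} with hC
  have hCclosed : ∀ x j, IsClosed (C x j) := by
    intro x j
    have : IsClosed ((H j : Set G)) := (H j).isClosed_of_isOpen (hopen j)
    exact this.preimage (continuous_mul_right _)
  have hCne : ∀ x j, (C x j).Nonempty :=
    fun x j => ⟨s j x, by simp [hC, (H j).one_mem]⟩
  have hCnested : ∀ x j, C x (j + 1) ⊆ C x j := by
    intro x j g hg
    have h1 : s (j+1) x * (s j x)⁻¹ ∈ H j := trSec_step H x₀ hdec h0 j x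
    have h2 : g * (s (j+1) x)⁻¹ ∈ H j := hdec j hg
    have := (H j).mul_mem h2 h1
    simpa [hC, mul_assoc] using this
  have hne : ∀ x : Y, (⋂ j, C x j).Nonempty := by
    intro x
    exact IsCompact.nonempty_iInter_of_sequence_nonempty_isCompact_isClosed _
      (hCnested x) (hCne x) ((hCclosed x 0).isCompact) (hCclosed x)
  set S : Y → G := fun x => (hne x).choose with hSdef
  have hS : ∀ x j, S x * (s j x)⁻¹ ∈ H j := by
    intro x j
    have := (hne x).choose_spec
    rw [Set.mem_iInter] at this
    exact this j
  -- the key property: S x • x₀ = x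
  have hSx : ∀ x : Y, S x • x₀ = x := by
    intro x
    -- x is in every H j orbit of S x • x₀
    have key : ∀ j, ∃ g ∈ H j, g • (S x • x₀) = x := by
      intro j
      obtain ⟨k, hk, hkx⟩ := hB j x
      refine ⟨k * (S x * (s j x)⁻¹)⁻¹, (H j).mul_mem hk ((H j).inv_mem (hS x j)), ?_⟩
      have hdecomp : S x • x₀ = (S x * (s j x)⁻¹) • (s j x • x₀) := by
        rw [← mul_smul, inv_mul_cancel_right]
      rw [mul_smul, hdecomp, inv_smul_smul]
      exact hkx
    by_contra hz
    -- every neighbourhood of S x • x₀ contains x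
    have hmem : ∀ U ∈ nhds (S x • x₀), x ∈ U := by
      intro U hU
      have hc : Continuous fun p : G × Y => p.1 • p.2 := continuous_smul
      have h1 : ((fun p : G × Y => p.1 • p.2) ⁻¹' U) ∈ nhds ((1 : G), S x • x₀) := by
        apply hc.continuousAt.preimage_mem_nhds
        simpa using hU
      rw [mem_nhds_prod_iff] at h1
      obtain ⟨V, hV, W, hW, hVW⟩ := h1
      obtain ⟨j, hj⟩ := hbasis V hV
      obtain ⟨g, hg, hgx⟩ := key j
      have : (g, S x • x₀) ∈ V ×ˢ W := ⟨hj hg, mem_of_mem_nhds hW⟩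
      have := hVW this
      simpa [hgx] using this
    exact (hmem {x}ᶜ (isOpen_compl_singleton.mem_nhds (by simpa using hz))) rfl
  -- continuity of S
  have hScont : Continuous S := by
    rw [continuous_iff_continuousAt]
    intro x
    intro U hU
    have h1 : (fun g : G => g * S x) ⁻¹' U ∈ nhds (1 : G) := by
      apply (continuous_mul_right (S x)).continuousAt.preimage_mem_nhds
      simpa using hU
    obtain ⟨j, hj⟩ := hbasis _ h1
    rw [Filter.mem_map]
    have hO : IsOpen {y : Y | ∃ h ∈ H j, h • x = y} := horbit j x
    have hxO : x ∈ {y : Y | ∃ h ∈ H j, h • x = y} := ⟨1, (H j).one_mem, one_smul _ _⟩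
    refine Filter.mem_of_superset (hO.mem_nhds hxO) ?_
    intro y hy
    have hrel : (trSetoid H j).r y x := (trSetoid H j).symm hy
    have hsy : s j y = s j x := hA j y x hrel
    have h2 : S y * (S x)⁻¹ ∈ H j := by
      have ha := hS y j
      have hb := hS x j
      rw [hsy] at ha
      have := (H j).mul_mem ha ((H j).inv_mem hb)
      have heq : (S y * (s j x)⁻¹) * (S x * (s j x)⁻¹)⁻¹ = S y * (S x)⁻¹ := by group
      rwa [heq] at this
    have : S y = (S y * (S x)⁻¹) * S x := by group
    rw [Set.mem_preimage, this]
    exact hj h2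
  -- conclusion
  refine ⟨fun p => S p.2 * (S p.1)⁻¹, ?_, ?_, ?_, ?_⟩
  · exact ((hScont.comp continuous_snd).mul
      ((hScont.comp continuous_fst).inv))
  · intro x; simp
  · intro x y
    have hx : (S x)⁻¹ • x = x₀ := by
      calc (S x)⁻¹ • x = (S x)⁻¹ • (S x • x₀) := by rw [hSx x]
        _ = x₀ := inv_smul_smul _ _
    show (S y * (S x)⁻¹) • x = y
    rw [mul_smul, hx, hSx y]
  · intro x y z
    show S z * (S y)⁻¹ * (S y * (S x)⁻¹) = S z * (S x)⁻¹
    group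
end
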